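/- For every $\theta < \theta_c$ one has $\int_{\mathbb{X}} H(a) e^{\theta + (f(\theta)-1)H(a)} q(da) < 1$, the minimal-solution function $f$ is differentiable at $\theta$, and its derivative satisfies the implicit relation $f'(\theta) = \int_{\mathbb{X}} (1 + f'(\theta) H(a)) e^{\theta + (f(\theta)-1)H(a)} q(da)$, equivalently $f'(\theta) = \frac{f(\theta)}{1 - \int_{\mathbb{X}} H(a) e^{\theta + (f(\theta)-1)H(a)} q(da)}$. -/

import Mathlib

set_option linter.unusedSectionVars false
set_option maxHeartbeats 1000000

open MeasureTheory Filter Set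

namespace Stmt9Aux

variable {X : Type*} [MeasurableSpace X] {q : Measure X} [IsProbabilityMeasure q]
  {H : X → ℝ}

noncomputable def G (q : Measure X) (H : X → ℝ) (y : ℝ) : ℝ :=
  ∫ a, Real.exp (H a * (y - 1)) ∂q

noncomputable def G1 (q : Measure X) (H : X → ℝ) (y : ℝ) : ℝ :=
  ∫ a, H a * Real.exp (H a * (y - 1)) ∂q

lemma intG (hint : ∀ x : ℝ, Integrable (fun a => Real.exp (x * H a)) q) (y : ℝ) :
    Integrable (fun a => Real.exp (H a * (y - 1))) q := by
  simpa [mul_comm] using hint (y - 1)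

lemma intG1 (hHmeas : Measurable H) (hHnonneg : ∀ a, 0 ≤ H a)
    (hint : ∀ x : ℝ, Integrable (fun a => Real.exp (x * H a)) q) (y : ℝ) :
    Integrable (fun a => H a * Real.exp (H a * (y - 1))) q := by
  refine (hint y).mono ?_ ?_
  · exact (hHmeas.mul ((hHmeas.mul_const (y - 1)).exp)).aestronglyMeasurable
  · refine Eventually.of_forall fun a => ?_
    have h1 : 0 ≤ H a := hHnonneg a
    have h2 : H a ≤ Real.exp (H a) := by
      have := Real.add_one_le_exp (H a); linarith
    have h3 : (0:ℝ) < Real.exp (H a * (y - 1)) := Real.exp_pos _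
    rw [Real.norm_eq_abs, Real.norm_eq_abs, abs_of_nonneg (by positivity),
      abs_of_nonneg (Real.exp_pos _).le]
    calc H a * Real.exp (H a * (y - 1)) ≤ Real.exp (H a) * Real.exp (H a * (y - 1)) :=
          mul_le_mul_of_nonneg_right h2 h3.le
      _ = Real.exp (y * H a) := by rw [← Real.exp_add]; ring_nf

lemma Gpos (hint : ∀ x : ℝ, Integrable (fun a => Real.exp (x * H a)) q) (y : ℝ) :
    0 < G q H y := by
  refine (integral_pos_iff_support_of_nonneg (fun a => (Real.exp_pos _).le)
    (intG hint y)).2 ?_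
  have : (Function.support fun a => Real.exp (H a * (y - 1))) = univ := by
    ext a; simp [Function.mem_support, (Real.exp_pos _).ne']
  rw [this]
  simp

lemma G1nonneg (hHnonneg : ∀ a, 0 ≤ H a) (y : ℝ) : 0 ≤ G1 q H y :=
  integral_nonneg fun a => mul_nonneg (hHnonneg a) (Real.exp_pos _).le

lemma Gmono (hHnonneg : ∀ a, 0 ≤ H a)
    (hint : ∀ x : ℝ, Integrable (fun a => Real.exp (x * H a)) q)
    {y z : ℝ} (h : y ≤ z) : G q H y ≤ G q H z := by
  refine integral_mono (intG hint y) (intG hint z) fun a => ?_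
  exact Real.exp_le_exp.2 (mul_le_mul_of_nonneg_left (by linarith) (hHnonneg a))

lemma G1mono (hHmeas : Measurable H) (hHnonneg : ∀ a, 0 ≤ H a)
    (hint : ∀ x : ℝ, Integrable (fun a => Real.exp (x * H a)) q)
    {y z : ℝ} (h : y ≤ z) : G1 q H y ≤ G1 q H z := by
  refine integral_mono (intG1 hHmeas hHnonneg hint y) (intG1 hHmeas hHnonneg hint z) fun a => ?_
  exact mul_le_mul_of_nonneg_left
    (Real.exp_le_exp.2 (mul_le_mul_of_nonneg_left (by linarith) (hHnonneg a))) (hHnonneg a)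

/-- convexity: tangent line at `z` lies below `G` at `y`. -/
lemma Gconvex (hHmeas : Measurable H) (hHnonneg : ∀ a, 0 ≤ H a)
    (hint : ∀ x : ℝ, Integrable (fun a => Real.exp (x * H a)) q)
    (y z : ℝ) : G q H z + G1 q H z * (y - z) ≤ G q H y := by
  have hleft : Integrable (fun a => Real.exp (H a * (z - 1))
      + (y - z) * (H a * Real.exp (H a * (z - 1)))) q :=
    (intG hint z).add ((intG1 hHmeas hHnonneg hint z).const_mul _)
  have hcalc : ∫ a, (Real.exp (H a * (z - 1))
      + (y - z) * (H a * Real.exp (H a * (z - 1)))) ∂q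
      = G q H z + G1 q H z * (y - z) := by
    rw [integral_add (intG hint z) ((intG1 hHmeas hHnonneg hint z).const_mul _),
      integral_const_mul]
    rw [G, G1]; ring
  rw [← hcalc]
  refine integral_mono hleft (intG hint y) fun a => ?_
  have h1 : 1 + H a * (y - z) ≤ Real.exp (H a * (y - z)) := by
    have := Real.add_one_le_exp (H a * (y - z)); linarith
  have h2 : (0:ℝ) < Real.exp (H a * (z - 1)) := Real.exp_pos _
  have : Real.exp (H a * (z - 1)) * (1 + H a * (y - z))
      ≤ Real.exp (H a * (z - 1)) * Real.exp (H a * (y - z)) :=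
    mul_le_mul_of_nonneg_left h1 h2.le
  rw [← Real.exp_add] at this
  calc Real.exp (H a * (z - 1)) + (y - z) * (H a * Real.exp (H a * (z - 1)))
      = Real.exp (H a * (z - 1)) * (1 + H a * (y - z)) := by ring
    _ ≤ Real.exp (H a * (z - 1) + H a * (y - z)) := this
    _ = Real.exp (H a * (y - 1)) := by ring_nf

/-- differentiability of `G` with derivative `G1`. -/
lemma Gderiv (hHmeas : Measurable H) (hHnonneg : ∀ a, 0 ≤ H a)
    (hint : ∀ x : ℝ, Integrable (fun a => Real.exp (x * H a)) q)
    (y : ℝ) : HasDerivAt (G q H) (G1 q H y) y := by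
  have h := hasDerivAt_integral_of_dominated_loc_of_deriv_le (μ := q)
    (F := fun x a => Real.exp (H a * (x - 1)))
    (F' := fun x a => H a * Real.exp (H a * (x - 1)))
    (bound := fun a => H a * Real.exp (H a * y)) (x₀ := y) (Metric.ball_mem_nhds y one_pos)
    (Eventually.of_forall fun x => ((hHmeas.mul_const (x-1)).exp).aestronglyMeasurable)
    (intG hint y)
    ((hHmeas.mul ((hHmeas.mul_const (y-1)).exp)).aestronglyMeasurable)
    (Eventually.of_forall fun a x hx => ?_) ?_
    (Eventually.of_forall fun a x hx => ?_)
  · exact h.2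
  · rw [Real.norm_eq_abs, abs_of_nonneg (mul_nonneg (hHnonneg a) (Real.exp_pos _).le)]
    have hxy : x - 1 ≤ y := by
      have := abs_lt.1 (by simpa [Real.dist_eq] using hx)
      linarith [this.2]
    exact mul_le_mul_of_nonneg_left
      (Real.exp_le_exp.2 (mul_le_mul_of_nonneg_left hxy (hHnonneg a))) (hHnonneg a)
  · have : Integrable (fun a => H a * Real.exp (H a * ((y + 1) - 1))) q :=
      intG1 hHmeas hHnonneg hint (y + 1)
    simpa using this
  · have : HasDerivAt (fun x : ℝ => H a * (x - 1)) (H a) x := by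
      simpa using ((hasDerivAt_id x).sub_const 1).const_mul (H a)
    simpa [mul_comm] using this.exp


lemma Gcont (hHmeas : Measurable H) (hHnonneg : ∀ a, 0 ≤ H a)
    (hint : ∀ x : ℝ, Integrable (fun a => Real.exp (x * H a)) q) :
    Continuous (G q H) :=
  continuous_iff_continuousAt.2 fun y => (Gderiv hHmeas hHnonneg hint y).continuousAt

/-- any point strictly below the least fixed point is strictly below the map. -/
lemma lt_psi (hHmeas : Measurable H) (hHnonneg : ∀ a, 0 ≤ H a)
    (hint : ∀ x : ℝ, Integrable (fun a => Real.exp (x * H a)) q)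
    {θ' z : ℝ}
    (hleast : IsLeast {y : ℝ | 0 ≤ y ∧ y = Real.exp θ' * G q H y} z)
    {x : ℝ} (hx0 : 0 ≤ x) (hxlt : x < z) : x < Real.exp θ' * G q H x := by
  by_contra hcon
  push_neg at hcon
  set h : ℝ → ℝ := fun t => Real.exp θ' * G q H t - t with hh
  have hcont : ContinuousOn h (Icc 0 x) :=
    ((continuous_const.mul (Gcont hHmeas hHnonneg hint)).sub continuous_id).continuousOn
  have h0 : 0 ≤ h 0 := by
    have := Gpos hint (q := q) (H := H) 0
    simp only [hh]
    nlinarith [Real.exp_pos θ']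
  have hx : h x ≤ 0 := by simp only [hh]; linarith
  obtain ⟨t, ht, hteq⟩ := intermediate_value_Icc' hx0 hcont ⟨hx, h0⟩
  have : z ≤ t := hleast.2 ⟨ht.1, by simp only [hh] at hteq; linarith⟩
  linarith [ht.2]

end Stmt9Aux
set_option maxHeartbeats 1000000

open MeasureTheory Filter Set Topology

/-- for `θ < θ_c` one has `∫ H e^{θ + (f(θ)-1)H} dq < 1`, `f` is
differentiable at `θ`, and `f'(θ) = ∫ (1 + f'(θ) H) e^{θ + (f(θ)-1)H} dq`,
equivalently `f'(θ) = f(θ) / (1 - ∫ H e^{θ + (f(θ)-1)H} dq)`. -/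
theorem stmt_9 {X : Type*} [MeasurableSpace X] (q : Measure X) [IsProbabilityMeasure q]
    (H : X → ℝ) (hHmeas : Measurable H) (hHnonneg : ∀ a, 0 ≤ H a)
    (hHmean : ∫ a, H a ∂q < 1)
    (hint : ∀ x : ℝ, Integrable (fun a => Real.exp (x * H a)) q)
    (hgrow : Tendsto (fun x : ℝ => (∫ a, Real.exp (x * H a) ∂q) - x) atTop atTop)
    (xc θc : ℝ) (hxc : 1 < xc) (hθc : 0 < θc)
    (hxceq : xc * ∫ a, H a * Real.exp (H a * (xc - 1)) ∂q
      = ∫ a, Real.exp (H a * (xc - 1)) ∂q)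
    (hθceq : θc = -Real.log (∫ a, H a * Real.exp (H a * (xc - 1)) ∂q))
    (f : ℝ → ℝ)
    (hf : ∀ θ ≤ θc,
      IsLeast {y : ℝ | 0 ≤ y ∧ y = Real.exp θ * ∫ a, Real.exp (H a * (y - 1)) ∂q} (f θ)) :
    ∀ θ < θc,
      (∫ a, H a * Real.exp (θ + (f θ - 1) * H a) ∂q) < 1 ∧
      ∃ d : ℝ, HasDerivAt f d θ ∧
        d = ∫ a, (1 + d * H a) * Real.exp (θ + (f θ - 1) * H a) ∂q ∧
        d = f θ / (1 - ∫ a, H a * Real.exp (θ + (f θ - 1) * H a) ∂q) := by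
  intro θ hθ
  set Gq : ℝ → ℝ := Stmt9Aux.G q H with hGq
  set G1q : ℝ → ℝ := Stmt9Aux.G1 q H with hG1q
  have hfL : ∀ θ' ≤ θc, IsLeast {y : ℝ | 0 ≤ y ∧ y = Real.exp θ' * Gq y} (f θ') := hf
  have hxceq' : xc * G1q xc = Gq xc := hxceq
  have hθceq' : θc = -Real.log (G1q xc) := hθceq
  -- basic facts about the critical point
  set m : ℝ := G1q xc with hm
  have hm0 : 0 < m := by
    rcases lt_or_eq_of_le (show (0:ℝ) ≤ G1q xc from Stmt9Aux.G1nonneg hHnonneg xc) with h | h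
    · exact h
    · exfalso
      have hGpos : 0 < Gq xc := Stmt9Aux.Gpos hint (q := q) (H := H) xc
      rw [← hxceq', hm, ← h] at hGpos
      simp at hGpos
  have hexpθc : Real.exp θc = m⁻¹ := by
    rw [hθceq', Real.exp_neg, Real.exp_log hm0]
  have hxcfix : xc = Real.exp θc * Gq xc := by
    rw [hexpθc, ← hxceq']
    field_simp
  have hfθc_le : f θc ≤ xc := (hfL θc le_rfl).2 ⟨by linarith, hxcfix⟩
  -- monotonicity : f θ ≤ f θc
  have hfix : ∀ θ' ≤ θc, f θ' = Real.exp θ' * Gq (f θ') := fun θ' h => ((hfL θ' h).1).2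
  have hfnonneg : ∀ θ' ≤ θc, 0 ≤ f θ' := fun θ' h => ((hfL θ' h).1).1
  have hfpos : ∀ θ' ≤ θc, 0 < f θ' := by
    intro θ' h
    rw [hfix θ' h]
    exact mul_pos (Real.exp_pos _) (Stmt9Aux.Gpos hint _)
  have hfmono : f θ ≤ f θc := by
    by_contra hcon
    push_neg at hcon
    have h1 := Stmt9Aux.lt_psi hHmeas hHnonneg hint (hfL θ hθ.le) (hfnonneg θc le_rfl) hcon
    have h2 : Real.exp θ * Gq (f θc) ≤ Real.exp θc * Gq (f θc) :=
      mul_le_mul_of_nonneg_right (Real.exp_le_exp.2 hθ.le)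
        (Stmt9Aux.Gpos hint _).le
    rw [← hfix θc le_rfl] at h2
    linarith
  set y₀ : ℝ := f θ with hy₀
  have hy0eq : y₀ = Real.exp θ * Gq y₀ := hfix θ hθ.le
  have hy0pos : 0 < y₀ := hfpos θ hθ.le
  set k : ℝ := Real.exp θ * G1q y₀ with hk
  have hk0 : 0 ≤ k := mul_nonneg (Real.exp_pos _).le (Stmt9Aux.G1nonneg hHnonneg _)
  have hk1 : k < 1 := by
    have h1 : G1q y₀ ≤ m :=
      Stmt9Aux.G1mono hHmeas hHnonneg hint (le_trans hfmono hfθc_le)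
    have h2 : k ≤ Real.exp θ * m :=
      mul_le_mul_of_nonneg_left h1 (Real.exp_pos _).le
    have h3 : Real.exp θ * m < Real.exp θc * m :=
      mul_lt_mul_of_pos_right (Real.exp_lt_exp.2 hθ) hm0
    rw [hexpθc, inv_mul_cancel₀ hm0.ne'] at h3
    linarith
  -- identification of the statement's integral with k
  have hKint : ∫ a, H a * Real.exp (θ + (f θ - 1) * H a) ∂q = k := by
    have hfun : (fun a => H a * Real.exp (θ + (f θ - 1) * H a))
        = fun a => Real.exp θ * (H a * Real.exp (H a * (f θ - 1))) := by
      funext a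
      rw [show θ + (f θ - 1) * H a = θ + H a * (f θ - 1) by ring, Real.exp_add]
      ring
    rw [hfun, integral_const_mul]
    rfl
  refine ⟨by rw [hKint]; exact hk1, ?_⟩
  have hne : (1 : ℝ) - k ≠ 0 := by linarith
  set d : ℝ := y₀ / (1 - k) with hd
  have hdk : d = y₀ + d * k := by
    have : d * (1 - k) = y₀ := by rw [hd]; exact div_mul_cancel₀ _ hne
    linarith
  -- continuity of f at θ
  have hθcev : ∀ᶠ θ' in 𝓝 θ, θ' ≤ θc :=
    eventually_nhds_iff.mpr ⟨Iio θc, fun x hx => le_of_lt hx, isOpen_Iio, hθ⟩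
  have hcontf : Tendsto f (𝓝 θ) (𝓝 y₀) := by
    rw [Metric.tendsto_nhds]
    intro ε hε
    -- upper bound: find x ∈ (y₀, y₀ + ε) with ψ_θ(x) < x
    obtain ⟨x, hx1, hx2⟩ : ∃ x, (y₀ < x ∧ x < y₀ + ε) ∧ Real.exp θ * Gq x < x := by
      have hD : HasDerivAt (fun t => Real.exp θ * Gq t - t) (k - 1) y₀ := by
        have h1 : HasDerivAt Gq (G1q y₀) y₀ := Stmt9Aux.Gderiv hHmeas hHnonneg hint y₀
        exact (h1.const_mul (Real.exp θ)).sub (hasDerivAt_id' y₀)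
      have hs := hasDerivAt_iff_tendsto_slope.1 hD
      have hneg : ∀ᶠ x in 𝓝[≠] y₀, slope (fun t => Real.exp θ * Gq t - t) y₀ x < 0 :=
        hs.eventually_lt_const (by linarith)
      have hneg' : ∀ᶠ x in 𝓝[>] y₀, slope (fun t => Real.exp θ * Gq t - t) y₀ x < 0 :=
        hneg.filter_mono (nhdsWithin_mono y₀ fun x hx =>
          Set.mem_compl_singleton_iff.2 (ne_of_gt hx))
      have hIoo : ∀ᶠ x in 𝓝[>] y₀, x ∈ Ioo y₀ (y₀ + ε) :=
        eventually_mem_set.2 (Ioo_mem_nhdsGT_of_mem ⟨le_rfl, by linarith⟩)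
      obtain ⟨x, hxneg, hxIoo⟩ := (hneg'.and hIoo).exists
      refine ⟨x, ⟨hxIoo.1, hxIoo.2⟩, ?_⟩
      rw [slope_def_field] at hxneg
      have h0 : Real.exp θ * Gq y₀ - y₀ = 0 := by linarith [hy0eq]
      rw [h0, sub_zero] at hxneg
      rcases div_neg_iff.1 hxneg with ⟨h1, h2⟩ | ⟨h1, h2⟩
      · linarith [hxIoo.1]
      · linarith
    have hupper : ∀ᶠ θ' in 𝓝 θ, θ' ≤ θc → f θ' ≤ x := by
      have htend : Tendsto (fun θ' => Real.exp θ' * Gq x) (𝓝 θ) (𝓝 (Real.exp θ * Gq x)) :=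
        (Real.continuous_exp.tendsto θ).mul_const _
      filter_upwards [htend.eventually_lt_const hx2] with θ' hlt hθ'c
      by_contra hcon
      push_neg at hcon
      have := Stmt9Aux.lt_psi hHmeas hHnonneg hint (hfL θ' hθ'c)
        (le_of_lt (lt_trans hy0pos hx1.1)) hcon
      linarith
    have hlower : ∀ᶠ θ' in 𝓝 θ, θ' ≤ θc → y₀ - ε < f θ' := by
      rcases le_or_gt y₀ ε with hyε | hyε
      · exact Eventually.of_forall fun θ' hθ' =>
          lt_of_le_of_lt (by linarith) (hfpos θ' hθ')
      · have hb0 : 0 < y₀ - ε := by linarith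
        have hcontg : ContinuousOn (fun t => Real.exp θ * Gq t - t) (Icc 0 (y₀ - ε)) :=
          ((continuous_const.mul (Stmt9Aux.Gcont hHmeas hHnonneg hint)).sub
            continuous_id).continuousOn
        obtain ⟨x₀, hx₀mem, hx₀min⟩ := isCompact_Icc.exists_isMinOn
          ⟨0, left_mem_Icc.2 hb0.le⟩ hcontg
        have hcpos : 0 < Real.exp θ * Gq x₀ - x₀ := by
          have := Stmt9Aux.lt_psi hHmeas hHnonneg hint (hfL θ hθ.le) hx₀mem.1
            (lt_of_le_of_lt hx₀mem.2 (by linarith))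
          linarith
        set c : ℝ := Real.exp θ * Gq x₀ - x₀ with hc
        have hGb : 0 < Gq (y₀ - ε) := Stmt9Aux.Gpos hint _
        have hev : ∀ᶠ θ' in 𝓝 θ, |Real.exp θ' - Real.exp θ| < c / Gq (y₀ - ε) := by
          have htend : Tendsto (fun θ' => |Real.exp θ' - Real.exp θ|) (𝓝 θ)
              (𝓝 |Real.exp θ - Real.exp θ|) :=
            (((Real.continuous_exp.tendsto θ).sub_const _).abs)
          apply htend.eventually_lt_const
          rw [sub_self, abs_zero]
          positivity
        filter_upwards [hev] with θ' hθ'' hθ'c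
        by_contra hcon
        push_neg at hcon
        have hmem : f θ' ∈ Icc 0 (y₀ - ε) := ⟨hfnonneg θ' hθ'c, hcon⟩
        have h1 : c ≤ Real.exp θ * Gq (f θ') - f θ' := hx₀min hmem
        have hPle : Gq (f θ') ≤ Gq (y₀ - ε) :=
          Stmt9Aux.Gmono hHnonneg hint hcon
        have hPpos : 0 < Gq (f θ') := Stmt9Aux.Gpos hint _
        have h2 : |Real.exp θ' - Real.exp θ| * Gq (f θ') < c := by
          calc |Real.exp θ' - Real.exp θ| * Gq (f θ')
              ≤ |Real.exp θ' - Real.exp θ| * Gq (y₀ - ε) :=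
                mul_le_mul_of_nonneg_left hPle (abs_nonneg _)
            _ < (c / Gq (y₀ - ε)) * Gq (y₀ - ε) :=
                mul_lt_mul_of_pos_right hθ'' hGb
            _ = c := by field_simp
        have h3 : f θ' = Real.exp θ' * Gq (f θ') := hfix θ' hθ'c
        have h5 : -(|Real.exp θ' - Real.exp θ| * Gq (f θ'))
            ≤ (Real.exp θ' - Real.exp θ) * Gq (f θ') := by
          have := neg_abs_le ((Real.exp θ' - Real.exp θ) * Gq (f θ'))
          rwa [abs_mul, abs_of_nonneg hPpos.le] at this
        have h6 : Real.exp θ' * Gq (f θ') = Real.exp θ * Gq (f θ')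
            + (Real.exp θ' - Real.exp θ) * Gq (f θ') := by ring
        linarith
    filter_upwards [hupper, hlower, hθcev] with θ' h1 h2 h3
    rw [Real.dist_eq, abs_lt]
    constructor
    · linarith [h2 h3]
    · linarith [h1 h3, hx1.2]
  -- derivative
  have hderiv : HasDerivAt f d θ := by
    set s : ℝ → ℝ := fun θ' => if f θ' = y₀ then G1q y₀
      else (Gq (f θ') - Gq y₀) / (f θ' - y₀) with hsdef
    have hs : Tendsto s (𝓝 θ) (𝓝 (G1q y₀)) := by
      rw [Metric.tendsto_nhds]
      intro ε hε
      have hslopeG := hasDerivAt_iff_tendsto_slope.1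
        (Stmt9Aux.Gderiv hHmeas hHnonneg hint y₀)
      obtain ⟨δ₁, hδ₁, hball⟩ := (Metric.tendsto_nhdsWithin_nhds.1 hslopeG) ε hε
      have hfev : ∀ᶠ θ' in 𝓝 θ, dist (f θ') y₀ < δ₁ :=
        (Metric.tendsto_nhds.1 hcontf) δ₁ hδ₁
      filter_upwards [hfev] with θ' hθ'
      by_cases hcase : f θ' = y₀
      · simp [hsdef, hcase, hε]
      · have hB := hball (Set.mem_compl_singleton_iff.2 hcase) hθ'
        rw [slope_def_field] at hB
        simpa [hsdef, hcase] using hB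
    have hkey : ∀ᶠ θ' in 𝓝 θ, (f θ' - y₀) * (1 - Real.exp θ' * s θ')
        = (Real.exp θ' - Real.exp θ) * Gq y₀ := by
      filter_upwards [hθcev] with θ' hθ'c
      have hA : f θ' = Real.exp θ' * Gq (f θ') := hfix θ' hθ'c
      have hC : Gq (f θ') - Gq y₀ = s θ' * (f θ' - y₀) := by
        by_cases hcase : f θ' = y₀
        · rw [hcase]; ring
        · rw [hsdef]; simp only [hcase, if_false]
          rw [div_mul_cancel₀ _ (sub_ne_zero.2 hcase)]
      linear_combination hA - hy0eq + Real.exp θ' * hC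
    have hdenom : Tendsto (fun θ' => 1 - Real.exp θ' * s θ') (𝓝 θ) (𝓝 (1 - k)) := by
      rw [hk]
      exact tendsto_const_nhds.sub ((Real.continuous_exp.tendsto θ).mul hs)
    have hdpos : ∀ᶠ θ' in 𝓝 θ, 0 < 1 - Real.exp θ' * s θ' :=
      hdenom.eventually_const_lt (by linarith)
    have hslopeexp : Tendsto (slope Real.exp θ) (𝓝[≠] θ) (𝓝 (Real.exp θ)) :=
      hasDerivAt_iff_tendsto_slope.1 (Real.hasDerivAt_exp θ)
    have htg : Tendsto (fun θ' => slope Real.exp θ θ' * Gq y₀ / (1 - Real.exp θ' * s θ'))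
        (𝓝[≠] θ) (𝓝 (Real.exp θ * Gq y₀ / (1 - k))) :=
      (hslopeexp.mul_const _).div (hdenom.mono_left nhdsWithin_le_nhds) hne
    have hd' : d = Real.exp θ * Gq y₀ / (1 - k) := by rw [hd, ← hy0eq]
    rw [hasDerivAt_iff_tendsto_slope, hd']
    refine htg.congr' ?_
    filter_upwards [(hkey.and hdpos).filter_mono nhdsWithin_le_nhds,
      self_mem_nhdsWithin] with θ' hx hne'
    obtain ⟨hkey', hdp⟩ := hx
    have hne2 : θ' - θ ≠ 0 := sub_ne_zero.2 (Set.mem_compl_singleton_iff.1 hne')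
    have h5 : f θ' - y₀ = (Real.exp θ' - Real.exp θ) * Gq y₀
        / (1 - Real.exp θ' * s θ') := by
      rw [eq_div_iff (ne_of_gt hdp)]
      exact hkey'
    rw [slope_def_field, slope_def_field]
    rw [show f θ' - f θ = f θ' - y₀ from rfl, h5]
    ring
  refine ⟨d, hderiv, ?_, ?_⟩
  · -- first equality
    have hEint : Integrable (fun a => Real.exp (θ + (f θ - 1) * H a)) q := by
      have : (fun a => Real.exp (θ + (f θ - 1) * H a))
          = fun a => Real.exp θ * Real.exp (H a * (f θ - 1)) := by
        funext a
        rw [show θ + (f θ - 1) * H a = θ + H a * (f θ - 1) by ring, Real.exp_add]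
      rw [this]
      exact (Stmt9Aux.intG hint (f θ)).const_mul _
    have hHEint : Integrable (fun a => H a * Real.exp (θ + (f θ - 1) * H a)) q := by
      have : (fun a => H a * Real.exp (θ + (f θ - 1) * H a))
          = fun a => Real.exp θ * (H a * Real.exp (H a * (f θ - 1))) := by
        funext a
        rw [show θ + (f θ - 1) * H a = θ + H a * (f θ - 1) by ring, Real.exp_add]
        ring
      rw [this]
      exact (Stmt9Aux.intG1 hHmeas hHnonneg hint (f θ)).const_mul _
    have hE : ∫ a, Real.exp (θ + (f θ - 1) * H a) ∂q = y₀ := by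
      have hfun : (fun a => Real.exp (θ + (f θ - 1) * H a))
          = fun a => Real.exp θ * Real.exp (H a * (f θ - 1)) := by
        funext a
        rw [show θ + (f θ - 1) * H a = θ + H a * (f θ - 1) by ring, Real.exp_add]
      rw [hfun, integral_const_mul]
      exact hy0eq.symm
    have hsplit : (fun a => (1 + d * H a) * Real.exp (θ + (f θ - 1) * H a))
        = fun a => Real.exp (θ + (f θ - 1) * H a)
            + d * (H a * Real.exp (θ + (f θ - 1) * H a)) := by
      funext a; ring
    rw [hsplit, integral_add hEint (hHEint.const_mul d), integral_const_mul, hKint, hE]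
    linarith [hdk]
  · rw [hKint]
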